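/- Let X be a real Banach space and x ∈ S_X. Then x is a Δ-point (i.e. x ∈ cl conv Δ_ε(x) for all ε > 0) if and only if for every x* ∈ X* with x*(x) = 1 the rank-one projection P = x* ⊗ x (given by Py = x*(y)·x) satisfies ‖Id − P‖ ≥ 2. -/

import Mathlib

open ContinuousLinearMap

-- key case analysis for the backward direction
lemma aux_case {X : Type*} [NormedAddCommGroup X] [NormedSpace ℝ X]
    (x y : X) (c ε η : ℝ) (hx : ‖x‖ = 1) (hy : ‖y‖ ≤ 1) (hc0 : 0 ≤ c)
    (hcM : c ≤ 1 + ε/2) (hε : 0 < ε) (hε1 : ε ≤ 1) (hη : 0 < η)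
    (h : 2 - ε ≤ ‖x - y‖ → c ≤ 1 - η) :
    ‖y - c • x‖ ≤ 2 - min η (ε/2) := by
  have hκη : min η (ε/2) ≤ η := min_le_left _ _
  have hκε : min η (ε/2) ≤ ε/2 := min_le_right _ _
  by_cases hΔ : 2 - ε ≤ ‖x - y‖
  · have hc1 : c ≤ 1 - η := h hΔ
    have : ‖y - c • x‖ ≤ ‖y‖ + ‖c • x‖ := norm_sub_le _ _
    rw [norm_smul, hx] at this
    simp only [Real.norm_eq_abs, abs_of_nonneg hc0, mul_one] at this
    linarith
  · push_neg at hΔ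
    by_cases hc1 : c ≤ 1
    · have key : y - c • x = c • (y - x) + (1 - c) • y := by
        rw [smul_sub, sub_smul, one_smul]; abel
      have : ‖y - c • x‖ ≤ c * ‖y - x‖ + (1 - c) * ‖y‖ := by
        rw [key]
        refine le_trans (norm_add_le _ _) ?_
        rw [norm_smul, norm_smul, Real.norm_eq_abs, Real.norm_eq_abs,
          abs_of_nonneg hc0, abs_of_nonneg (by linarith)]
      rw [norm_sub_rev] at hΔ
      nlinarith [norm_nonneg (y - x), norm_nonneg y]
    · push_neg at hc1
      have key : y - c • x = (y - x) - (c - 1) • x := by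
        rw [sub_smul, one_smul]; abel
      have : ‖y - c • x‖ ≤ ‖y - x‖ + (c - 1) * ‖x‖ := by
        rw [key]
        refine le_trans (norm_sub_le _ _) ?_
        rw [norm_smul, Real.norm_eq_abs, abs_of_nonneg (by linarith)]
      rw [norm_sub_rev] at hΔ
      rw [hx] at this
      linarith

set_option maxHeartbeats 1600000 in
set_option synthInstance.maxHeartbeats 400000 in
/-- `x ∈ S_X` is a Δ-point iff for every `x* ∈ X*` with `x*(x) = 1` the rank-one
projection `P = x* ⊗ x` (i.e. `P y = x*(y) • x`) satisfies `‖Id - P‖ ≥ 2`. -/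
theorem stmt_1 {X : Type*} [NormedAddCommGroup X] [NormedSpace ℝ X] [CompleteSpace X]
    (x : X) (hx : ‖x‖ = 1) :
    (∀ ε > (0 : ℝ),
      x ∈ closure (convexHull ℝ {y : X | ‖y‖ ≤ 1 ∧ 2 - ε ≤ ‖x - y‖})) ↔
    (∀ f : X →L[ℝ] ℝ, f x = 1 →
      2 ≤ ‖ContinuousLinearMap.id ℝ X - f.smulRight x‖) := by
  constructor
  · -- forward direction
    intro hΔ f hfx
    set P := ContinuousLinearMap.id ℝ X - f.smulRight x with hP
    by_contra hlt
    push_neg at hlt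
    -- choose ε
    obtain ⟨ε, hε0, hε1, hεN⟩ : ∃ ε : ℝ, 0 < ε ∧ ε ≤ 1/2 ∧ ε ≤ (2 - ‖P‖)/4 :=
      ⟨min ((2 - ‖P‖)/4) (1/2), lt_min (by linarith) (by norm_num),
        min_le_right _ _, min_le_left _ _⟩
    -- x is in the closure, get y close
    have hmem := hΔ ε hε0
    have hδ0 : 0 < ε / (‖f‖ + 1) := by positivity
    obtain ⟨y, hy, hyx⟩ := Metric.mem_closure_iff.1 hmem (ε / (‖f‖ + 1)) hδ0
    -- f y > 1 - ε
    have hfy : 1 - ε < f y := by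
      have h1 : |f x - f y| ≤ ‖f‖ * ‖x - y‖ := by
        rw [← map_sub]; exact f.le_opNorm _
      have h2 : ‖f‖ * ‖x - y‖ < ‖f‖ * (ε / (‖f‖ + 1)) + (ε / (‖f‖ + 1)) * 1 := by
        rw [dist_eq_norm] at hyx
        nlinarith [norm_nonneg f, norm_nonneg (x - y)]
      have h3 : ‖f‖ * (ε / (‖f‖ + 1)) + (ε / (‖f‖ + 1)) * 1 = ε := by
        field_simp
      have := abs_le.1 h1
      rw [hfx] at this
      linarith [this.2]
    -- y in convex hull: find z ∈ Δ_ε with f z ≥ 1 - ε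
    rw [convexHull_eq] at hy
    obtain ⟨ι, t, w, z, hw0, hw1, hzs, hcm⟩ := hy
    have hcm' : ∑ i ∈ t, w i • z i = y := by
      rw [← hcm, Finset.centerMass_eq_of_sum_1 _ _ hw1]
    have hfy' : f y = ∑ i ∈ t, w i * f (z i) := by
      rw [← hcm', map_sum]; simp [smul_eq_mul]
    obtain ⟨i, hi, hfz⟩ : ∃ i ∈ t, 1 - ε ≤ f (z i) := by
      by_contra hcon
      push_neg at hcon
      have : ∑ i ∈ t, w i * f (z i) ≤ ∑ i ∈ t, w i * (1 - ε) := by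
        refine Finset.sum_le_sum fun i hi => ?_
        rcases eq_or_lt_of_le (hw0 i hi) with h | h
        · rw [← h]; simp
        · exact mul_le_mul_of_nonneg_left (le_of_lt (hcon i hi)) (le_of_lt h)
      rw [← Finset.sum_mul, hw1, one_mul] at this
      linarith [hfy, hfy'.symm ▸ this]
    obtain ⟨hz1, hz2⟩ := hzs i hi
    -- norming functional for x - z i
    have hxz : x - z i ≠ 0 := by
      intro h0
      rw [h0, norm_zero] at hz2; linarith
    obtain ⟨g, hg1, hg2⟩ := exists_dual_vector ℝ (x - z i) (norm_ne_zero_iff.2 hxz)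
    have hg2' : g (x - z i) = ‖x - z i‖ := by exact_mod_cast hg2
    -- g x ≥ 1 - ε, g (z i) ≤ ε - 1
    have hgzabs : |g (z i)| ≤ 1 := by
      calc |g (z i)| ≤ ‖g‖ * ‖z i‖ := g.le_opNorm _
        _ ≤ 1 := by rw [hg1]; linarith
    have hgz : g (z i) ≤ 1 := le_trans (le_abs_self _) hgzabs
    have hgz' : -1 ≤ g (z i) := by linarith [abs_le.1 hgzabs |>.1]
    have hgx' : |g x| ≤ 1 := by
      calc |g x| ≤ ‖g‖ * ‖x‖ := g.le_opNorm _
        _ = 1 := by rw [hg1, hx, one_mul]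
    have hgsub : g x - g (z i) = ‖x - z i‖ := by rw [← map_sub, hg2']
    have hz2' : 2 - ε ≤ g x - g (z i) := by rw [hgsub]; exact hz2
    have hgx : 1 - ε ≤ g x := by linarith
    have hgzi : g (z i) ≤ ε - 1 := by
      have h1 := abs_le.1 hgx'
      linarith [h1.2]
    -- ‖P (z i)‖ ≥ (1-ε)(2-ε)
    have hPz : P (z i) = z i - f (z i) • x := by
      simp [hP, ContinuousLinearMap.sub_apply, ContinuousLinearMap.smulRight_apply]
    have hlow : (1 - ε) * (1 - ε) + (1 - ε) ≤ ‖P (z i)‖ := by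
      have h1 : g (f (z i) • x - z i) ≤ ‖f (z i) • x - z i‖ := by
        calc g (f (z i) • x - z i) ≤ |g (f (z i) • x - z i)| := le_abs_self _
          _ ≤ ‖g‖ * ‖f (z i) • x - z i‖ := g.le_opNorm _
          _ = ‖f (z i) • x - z i‖ := by rw [hg1, one_mul]
      have h2 : g (f (z i) • x - z i) = f (z i) * g x - g (z i) := by
        rw [map_sub, map_smul]; simp [smul_eq_mul]
      have h3 : (1 - ε) * (1 - ε) ≤ f (z i) * g x := by
        nlinarith [hfz, hgx]
      have h4 : ‖f (z i) • x - z i‖ = ‖P (z i)‖ := by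
        rw [hPz, norm_sub_rev]
      linarith [h1, h2 ▸ h1, h4 ▸ (h2 ▸ h1)]
    have hPle : ‖P (z i)‖ ≤ ‖P‖ := by
      calc ‖P (z i)‖ ≤ ‖P‖ * ‖z i‖ := P.le_opNorm _
        _ ≤ ‖P‖ * 1 := mul_le_mul_of_nonneg_left hz1 (norm_nonneg _)
        _ = ‖P‖ := mul_one _
    have hexp : (1 - ε) * (1 - ε) = 1 - 2*ε + ε*ε := by ring
    have hsq : 0 ≤ ε * ε := mul_self_nonneg ε
    linarith [hlow, hPle, hεN, hε0, hε1, hlt, hexp ▸ hlow]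
  · -- backward direction (contrapositive)
    intro hP
    by_contra hΔ
    push_neg at hΔ
    obtain ⟨ε₀, hε₀, hx₀⟩ := hΔ
    obtain ⟨ε, hε0, hε1, hεε₀⟩ : ∃ ε : ℝ, 0 < ε ∧ ε ≤ 1 ∧ ε ≤ ε₀ :=
      ⟨min ε₀ 1, lt_min hε₀ one_pos, min_le_right _ _, min_le_left _ _⟩
    set Δ : Set X := {y : X | ‖y‖ ≤ 1 ∧ 2 - ε ≤ ‖x - y‖} with hΔdef
    have hsub : Δ ⊆ {y : X | ‖y‖ ≤ 1 ∧ 2 - ε₀ ≤ ‖x - y‖} := by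
      intro y hy
      exact ⟨hy.1, le_trans (by linarith) hy.2⟩
    have hxΔ : x ∉ closure (convexHull ℝ Δ) := fun h =>
      hx₀ (closure_mono (convexHull_mono hsub) h)
    -- separate
    obtain ⟨g, u, hgu, hux⟩ := geometric_hahn_banach_closed_point
      (convex_convexHull ℝ Δ).closure isClosed_closure hxΔ
    have hx0 : x ≠ 0 := by intro h; rw [h, norm_zero] at hx; norm_num at hx
    obtain ⟨g₀, hg₀1, hg₀xx⟩ := exists_dual_vector ℝ x (norm_ne_zero_iff.2 hx0)
    have hg₀x : g₀ x = 1 := by rw [← hx]; exact_mod_cast hg₀xx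
    have habsgx : |g x| ≤ ‖g‖ := by
      calc |g x| ≤ ‖g‖ * ‖x‖ := g.le_opNorm _
        _ = ‖g‖ := by rw [hx, mul_one]
    have hgx_le : g x ≤ ‖g‖ := le_trans (le_abs_self _) habsgx
    have hgx_ge : -‖g‖ ≤ g x := by linarith [abs_le.1 habsgx |>.1]
    -- choose shift constant c
    obtain ⟨c, hcpos, hcgx, hMc⟩ :
        ∃ c : ℝ, 0 < c ∧ 0 < g x + c ∧ ‖g‖ + c ≤ (1 + ε/2) * (g x + c) := by
      refine ⟨‖g‖ + 1 + (2/ε) * (‖g‖ - g x), ?_, ?_, ?_⟩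
      · have h1 : 0 ≤ (2/ε) * (‖g‖ - g x) :=
          mul_nonneg (by positivity) (by linarith)
        have := norm_nonneg g
        linarith
      · have h1 : 0 ≤ (2/ε) * (‖g‖ - g x) :=
          mul_nonneg (by positivity) (by linarith)
        linarith
      · have h2 : (ε/2) * ((2/ε) * (‖g‖ - g x)) = ‖g‖ - g x := by
          field_simp
        have h3 : 0 ≤ (ε/2) * (g x + ‖g‖ + 1) :=
          mul_nonneg (by positivity) (by linarith)
        have h4 : (1 + ε/2) * (g x + (‖g‖ + 1 + (2/ε) * (‖g‖ - g x)))
            = (g x + (‖g‖ + 1 + (2/ε) * (‖g‖ - g x)))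
              + ((ε/2) * (g x + ‖g‖ + 1) + (ε/2) * ((2/ε) * (‖g‖ - g x))) := by
          ring
        linarith
    -- build the functional f and the gap η
    obtain ⟨f, η, hη0, hfx, hfnorm, hfΔ⟩ :
        ∃ (f : X →L[ℝ] ℝ) (η : ℝ), 0 < η ∧ f x = 1 ∧ ‖f‖ ≤ 1 + ε/2 ∧
          ∀ z ∈ Δ, f z ≤ 1 - η := by
      refine ⟨(g x + c)⁻¹ • (g + c • g₀), (g x - u) / (g x + c),
        div_pos (by linarith) hcgx, ?_, ?_, ?_⟩
      · show (g x + c)⁻¹ • ((g + c • g₀) x) = 1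
        simp only [ContinuousLinearMap.add_apply, ContinuousLinearMap.smul_apply, hg₀x,
          smul_eq_mul, mul_one]
        exact inv_mul_cancel₀ (ne_of_gt hcgx)
      · have h2 : ‖g + c • g₀‖ ≤ ‖g‖ + c := by
          calc ‖g + c • g₀‖ ≤ ‖g‖ + ‖c • g₀‖ := norm_add_le _ _
            _ ≤ ‖g‖ + ‖c‖ * ‖g₀‖ := by linarith [ContinuousLinearMap.opNorm_smul_le c g₀]
            _ = ‖g‖ + c := by
                rw [hg₀1, mul_one, Real.norm_eq_abs, abs_of_pos hcpos]
        calc ‖(g x + c)⁻¹ • (g + c • g₀)‖ ≤ ‖(g x + c)⁻¹‖ * ‖g + c • g₀‖ :=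
              ContinuousLinearMap.opNorm_smul_le _ _
          _ = (g x + c)⁻¹ * ‖g + c • g₀‖ := by
              rw [Real.norm_eq_abs, abs_of_pos (inv_pos.2 hcgx)]
          _ ≤ (g x + c)⁻¹ * (‖g‖ + c) :=
              mul_le_mul_of_nonneg_left h2 (le_of_lt (inv_pos.2 hcgx))
          _ ≤ 1 + ε/2 := by
              rw [inv_mul_le_iff₀ hcgx]
              linarith
      · intro z hz
        have hgz : g z < u := hgu z (subset_closure (subset_convexHull ℝ Δ hz))
        have hg₀z : g₀ z ≤ 1 := by
          calc g₀ z ≤ |g₀ z| := le_abs_self _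
            _ ≤ ‖g₀‖ * ‖z‖ := g₀.le_opNorm _
            _ ≤ 1 := by rw [hg₀1, one_mul]; exact hz.1
        show (g x + c)⁻¹ • ((g + c • g₀) z) ≤ 1 - (g x - u) / (g x + c)
        rw [ContinuousLinearMap.add_apply, ContinuousLinearMap.smul_apply,
          smul_eq_mul, smul_eq_mul]
        rw [inv_mul_le_iff₀ hcgx]
        have h1 : g z + c * g₀ z ≤ u + c := by nlinarith
        have h2 : (1 - (g x - u) / (g x + c)) * (g x + c) = u + c := by
          field_simp
          ring
        linarith
    clear hgu hux hg₀x hg₀xx hg₀1 hgx_le hcpos hcgx hMc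
    -- now bound the operator norm
    have hκ0 : 0 < min η (ε/2) := lt_min hη0 (by positivity)
    set κ : ℝ := min η (ε/2) with hκdef
    have hκ1 : κ ≤ 1 := le_trans (min_le_right _ _) (by linarith)
    have hbound : ∀ y : X, ‖y‖ ≤ 1 → ‖y - f y • x‖ ≤ 2 - κ := by
      intro y hy
      by_cases hc0 : 0 ≤ f y
      · refine aux_case x y (f y) ε η hx hy hc0 ?_ hε0 hε1 hη0 ?_
        · calc f y ≤ |f y| := le_abs_self _
            _ ≤ ‖f‖ * ‖y‖ := f.le_opNorm _
            _ ≤ (1 + ε/2) * 1 :=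
                mul_le_mul hfnorm hy (norm_nonneg _) (by linarith [norm_nonneg f])
            _ = 1 + ε/2 := mul_one _
        · intro h
          exact hfΔ y ⟨hy, h⟩
      · push_neg at hc0
        have key : ‖y - f y • x‖ = ‖(-y) - (- f y) • x‖ := by
          rw [← norm_neg (y - f y • x)]
          congr 1
          rw [neg_smul, neg_sub, sub_neg_eq_add, neg_add_eq_sub]
        rw [key]
        refine aux_case x (-y) (- f y) ε η hx (by rwa [norm_neg]) (by linarith) ?_ hε0 hε1 hη0 ?_
        · calc - f y ≤ |f y| := neg_le_abs _
            _ ≤ ‖f‖ * ‖y‖ := f.le_opNorm _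
            _ ≤ (1 + ε/2) * 1 := mul_le_mul hfnorm hy (norm_nonneg _) (by linarith [norm_nonneg f])
            _ = 1 + ε/2 := mul_one _
        · intro h
          have hmem : (-y) ∈ Δ := ⟨by rwa [norm_neg], by rwa [sub_neg_eq_add] at h ⊢⟩
          have := hfΔ (-y) hmem
          rw [map_neg] at this
          linarith
    have hopnorm : ‖ContinuousLinearMap.id ℝ X - f.smulRight x‖ ≤ 2 - κ := by
      refine ContinuousLinearMap.opNorm_le_bound _ (by linarith) fun y => ?_
      by_cases hy0 : y = 0
      · simp [hy0]
      · have hny : 0 < ‖y‖ := norm_pos_iff.2 hy0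
        have happ : (ContinuousLinearMap.id ℝ X - f.smulRight x) y = y - f y • x := by
          simp [ContinuousLinearMap.sub_apply, ContinuousLinearMap.smulRight_apply]
        rw [happ]
        have hu : ‖(‖y‖⁻¹ • y) - f (‖y‖⁻¹ • y) • x‖ ≤ 2 - κ := by
          refine hbound _ ?_
          rw [norm_smul, Real.norm_eq_abs, abs_of_pos (inv_pos.2 hny),
            inv_mul_cancel₀ (ne_of_gt hny)]
        have hscale : y - f y • x = ‖y‖ • ((‖y‖⁻¹ • y) - f (‖y‖⁻¹ • y) • x) := by
          rw [map_smul, smul_sub, smul_smul, smul_eq_mul,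
            mul_inv_cancel₀ (ne_of_gt hny), one_smul]
          congr 1
          rw [smul_smul, ← mul_assoc, mul_inv_cancel₀ (ne_of_gt hny), one_mul]
        rw [hscale, norm_smul, Real.norm_eq_abs, abs_of_pos hny, mul_comm]
        exact mul_le_mul_of_nonneg_right hu (le_of_lt hny)
    have := hP f hfx
    linarith
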